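/- Let a₁ < a₂ < a₃ be positive integers with gcd(a₁, a₂, a₃) = 1 and with a₃ = 2a₁ or a₃ = 2a₂. Then there exists a real θ such that cos(a₁θ) + cos(a₂θ) + cos(a₃θ) ≤ −3/2. -/

import Mathlib

open Real

private lemma cos_third (m : ℕ) (hm : ¬ (3 ∣ m)) :
    Real.cos (2 * Real.pi * m / 3) = -(1/2) := by
  obtain ⟨q, s, hmq, hs⟩ : ∃ q s, m = 3 * q + s ∧ (s = 1 ∨ s = 2) := by
    exact ⟨m / 3, m % 3, by omega, by omega⟩
  have h : 2 * Real.pi * m / 3 = 2 * Real.pi * s / 3 + q * (2 * Real.pi) := by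
    push_cast [hmq]; ring
  rw [h, Real.cos_add_nat_mul_two_pi]
  rcases hs with rfl | rfl
  · have : 2 * Real.pi * (1:ℕ) / 3 = Real.pi - Real.pi / 3 := by push_cast; ring
    rw [this, Real.cos_pi_sub, Real.cos_pi_div_three]
  · have : 2 * Real.pi * (2:ℕ) / 3 = Real.pi + Real.pi / 3 := by push_cast; ring
    rw [show Real.pi + Real.pi / 3 = Real.pi / 3 + Real.pi by ring] at this
    rw [this, Real.cos_add_pi, Real.cos_pi_div_three]

private lemma cos_mid (x : ℝ) (h1 : 2 * Real.pi / 3 ≤ x) (h2 : x ≤ 4 * Real.pi / 3) :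
    Real.cos x ≤ -(1/2) := by
  have hpi := Real.pi_pos
  have hval : Real.cos (2 * Real.pi / 3) = -(1/2) := by
    have : 2 * Real.pi / 3 = Real.pi - Real.pi / 3 := by ring
    rw [this, Real.cos_pi_sub, Real.cos_pi_div_three]
  rcases le_or_gt x Real.pi with hx | hx
  · have := Real.cos_le_cos_of_nonneg_of_le_pi (by positivity) hx h1
    linarith [this, hval.le]
  · have heq : Real.cos (2 * Real.pi - x) = Real.cos x := Real.cos_two_pi_sub x
    have h1' : 2 * Real.pi / 3 ≤ 2 * Real.pi - x := by linarith
    have h2' : 2 * Real.pi - x ≤ Real.pi := by linarith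
    have := Real.cos_le_cos_of_nonneg_of_le_pi (by positivity) h2' h1'
    linarith [this, hval.le]

private lemma key_nat (a b : ℕ) (ha : 2 ≤ a) (hab : Nat.Coprime a b) :
    ∃ m, ¬ (3 ∣ m) ∧ a ≤ b * m % (3 * a) ∧ b * m % (3 * a) ≤ 2 * a := by
  by_cases h3 : 3 ∣ b
  · -- b = 3 b', 3 ∤ a
    obtain ⟨b', rfl⟩ := h3
    have h3a : ¬ (3 ∣ a) := by
      intro h
      have : (3:ℕ) ∣ Nat.gcd a (3 * b') := Nat.dvd_gcd h ⟨b', rfl⟩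
      rw [hab] at this; omega
    have hab' : Nat.Coprime b' a := by
      exact (Nat.Coprime.coprime_dvd_right (dvd_mul_left b' 3) hab).symm
    set c := (a + 2) / 3 with hc
    have hca : a ≤ 3 * c ∧ 3 * c ≤ a + 2 ∧ c < a := by omega
    obtain ⟨i, -, hi⟩ := Nat.exists_mul_mod_eq_one_of_coprime hab' (by omega)
    set m₀ := i * c with hm₀
    have hbm₀ : b' * m₀ % a = c := by
      have : b' * m₀ % a = (b' * i % a) * (c % a) % a := by
        rw [hm₀, ← Nat.mul_assoc, Nat.mul_mod]
      rw [this, hi, Nat.one_mul, Nat.mod_mod_of_dvd _ dvd_rfl,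
        Nat.mod_eq_of_lt hca.2.2]
    set m := if 3 ∣ m₀ then m₀ + a else m₀ with hm
    have hm3 : ¬ (3 ∣ m) := by
      rw [hm]; split <;> omega
    have hbm : b' * m % a = c := by
      rw [hm]; split
      · rw [Nat.mul_add, Nat.add_mul_mod_self_right]; exact hbm₀
      · exact hbm₀
    refine ⟨m, hm3, ?_, ?_⟩ <;>
      rw [show 3 * b' * m = 3 * (b' * m) by ring, Nat.mul_mod_mul_left, hbm] <;> omega
  · -- 3 ∤ b : b invertible mod 3a
    have hb3 : Nat.Coprime b 3 :=
      ((Nat.prime_three.coprime_iff_not_dvd).mpr h3).symm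
    have hcop : Nat.Coprime b (3 * a) := Nat.Coprime.mul_right hb3 hab.symm
    obtain ⟨i, -, hi⟩ := Nat.exists_mul_mod_eq_one_of_coprime hcop (by omega)
    set r := if 3 ∣ a then a + 1 else a with hr
    have hr3 : ¬ (3 ∣ r) := by rw [hr]; split <;> omega
    have hrb : a ≤ r ∧ r ≤ 2 * a := by rw [hr]; split <;> omega
    refine ⟨i * r, ?_, ?_, ?_⟩
    · intro hdvd
      have h1 : b * (i * r) % (3 * a) = r := by
        rw [← Nat.mul_assoc, Nat.mul_mod, hi, Nat.one_mul,
          Nat.mod_mod_of_dvd _ dvd_rfl, Nat.mod_eq_of_lt (by omega)]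
      have h2 : (3:ℕ) ∣ b * (i * r) := Dvd.dvd.mul_left hdvd b
      have h3' : (3:ℕ) ∣ b * (i * r) % (3 * a) :=
        (Nat.dvd_mod_iff ⟨a, rfl⟩).mpr h2
      rw [h1] at h3'; exact hr3 h3'
    all_goals
      rw [← Nat.mul_assoc, Nat.mul_mod, hi, Nat.one_mul,
        Nat.mod_mod_of_dvd _ dvd_rfl, Nat.mod_eq_of_lt (by omega)]
    · exact hrb.1
    · exact hrb.2

private lemma helper (a b : ℕ) (ha : 2 ≤ a) (hab : Nat.Coprime a b) :
    ∃ θ : ℝ, Real.cos (a * θ) = -(1/2) ∧ Real.cos (2 * a * θ) = -(1/2) ∧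
      Real.cos (b * θ) ≤ -(1/2) := by
  obtain ⟨m, hm3, hlo, hhi⟩ := key_nat a b ha hab
  have haR : (0:ℝ) < a := by exact_mod_cast (by omega : 0 < a)
  have hpi := Real.pi_pos
  refine ⟨2 * Real.pi * m / (3 * a), ?_, ?_, ?_⟩
  · have : (a:ℝ) * (2 * Real.pi * m / (3 * a)) = 2 * Real.pi * m / 3 := by
      field_simp
    rw [this]; exact cos_third m hm3
  · have : (2 * (a:ℝ)) * (2 * Real.pi * m / (3 * a)) = 2 * Real.pi * (2 * m : ℕ) / 3 := by
      push_cast; field_simp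
    rw [this]; exact cos_third (2 * m) (by omega)
  · set r := b * m % (3 * a) with hrdef
    set q := b * m / (3 * a) with hqdef
    have hqr : b * m = 3 * a * q + r := (Nat.div_add_mod (b * m) (3 * a)).symm
    have heq : (b:ℝ) * (2 * Real.pi * m / (3 * a)) =
        2 * Real.pi * r / (3 * a) + q * (2 * Real.pi) := by
      have hbm : (b:ℝ) * m = 3 * a * q + r := by exact_mod_cast hqr
      field_simp
      nlinarith [hbm]
    rw [heq, Real.cos_add_nat_mul_two_pi]
    have hrR : (a:ℝ) ≤ r := by exact_mod_cast hlo
    have hrR2 : (r:ℝ) ≤ 2 * a := by exact_mod_cast hhi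
    apply cos_mid
    · rw [div_le_div_iff₀ (by positivity) (by positivity)]
      nlinarith
    · rw [div_le_div_iff₀ (by positivity) (by positivity)]
      nlinarith

theorem case_two_exists_cos_sum_le (a₁ a₂ a₃ : ℕ) (h₁ : 0 < a₁)
    (h₁₂ : a₁ < a₂) (h₂₃ : a₂ < a₃)
    (hgcd : Nat.gcd a₁ (Nat.gcd a₂ a₃) = 1)
    (hcase : a₃ = 2 * a₁ ∨ a₃ = 2 * a₂) :
    ∃ θ : ℝ, Real.cos (a₁ * θ) + Real.cos (a₂ * θ) + Real.cos (a₃ * θ) ≤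
      -3/2 := by
  have hcop : Nat.Coprime a₁ a₂ := by
    have hd1 : Nat.gcd a₁ a₂ ∣ a₁ := Nat.gcd_dvd_left _ _
    have hd2 : Nat.gcd a₁ a₂ ∣ a₂ := Nat.gcd_dvd_right _ _
    have hd3 : Nat.gcd a₁ a₂ ∣ a₃ := by
      rcases hcase with rfl | rfl
      · exact Dvd.dvd.mul_left hd1 2
      · exact Dvd.dvd.mul_left hd2 2
    have : Nat.gcd a₁ a₂ ∣ Nat.gcd a₁ (Nat.gcd a₂ a₃) :=
      Nat.dvd_gcd hd1 (Nat.dvd_gcd hd2 hd3)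
    rw [hgcd] at this
    exact Nat.dvd_one.mp this
  rcases hcase with h3 | h3
  · -- a₃ = 2 a₁
    have ha : 2 ≤ a₁ := by omega
    obtain ⟨θ, hA, hA2, hB⟩ := helper a₁ a₂ ha hcop
    refine ⟨θ, ?_⟩
    have h3R : (a₃:ℝ) = 2 * a₁ := by exact_mod_cast h3
    rw [h3R, hA]
    linarith
  · -- a₃ = 2 a₂
    have ha : 2 ≤ a₂ := by omega
    obtain ⟨θ, hA, hA2, hB⟩ := helper a₂ a₁ ha hcop.symm
    refine ⟨θ, ?_⟩
    have h3R : (a₃:ℝ) = 2 * a₂ := by exact_mod_cast h3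
    rw [h3R, hA]
    linarith
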